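/- For every n ≥ 3 there exists an irreducible λ-quiddity of length n on Z × Z; that is, a tuple ((a_1,b_1),...,(a_n,b_n)) ∈ (Z×Z)^n with M_n = ±Id over Z×Z which cannot be written, up to cyclic rotation and reversal of indices, as (c_1,...,c_{n+2-l}) ⊕ (d_1,...,d_l) where 3 ≤ l ≤ n-1 and (d_1,...,d_l) satisfies M_l = ±Id over Z×Z. Explicitly, for n ≥ 4 one can take the first coordinates (1, n-2, 1, 2,...,2) and the second coordinates (2, 1, n-2, 1, 2,...,2). -/

import Mathlib

open Matrix

/-- `Mlist [a₁,…,aₙ] = M(aₙ)⋯M(a₁)` where `M(a) = [[a,-1],[1,0]]`. -/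
def Mlist {A : Type*} [CommRing A] (l : List A) : Matrix (Fin 2) (Fin 2) A :=
  ((l.map (fun a => !![a, -1; 1, 0])).reverse).prod

/-- The continuant `K` (tridiagonal determinant), with `K [] = 1`. -/
def cont {A : Type*} [CommRing A] : List A → A
  | [] => 1
  | [a] => a
  | a :: b :: l => a * cont (b :: l) - cont l

/-- `(a₁,…,aₙ) ⊕ (b₁,…,bₘ) = (a₁+bₘ, a₂,…,aₙ₋₁, aₙ+b₁, b₂,…,bₘ₋₁)` (for lists of length ≥ 2). -/
def oplus {A : Type*} [CommRing A] (la lb : List A) : List A :=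
  match la, lb with
  | a1 :: ta, b1 :: tb =>
      (a1 + tb.getLastD b1) :: (ta.dropLast ++ ((ta.getLastD a1 + b1) :: tb.dropLast))
  | _, _ => []

namespace Stmt18aux

variable {A : Type*} [CommRing A]

def Mm (a : A) : Matrix (Fin 2) (Fin 2) A := !![a,-1;1,0]
def Nm (a : A) : Matrix (Fin 2) (Fin 2) A := !![0,1;-1,a]

lemma Mlist_nil : Mlist ([] : List A) = 1 := rfl

lemma Mlist_cons (a : A) (t : List A) : Mlist (a :: t) = Mlist t * Mm a := by
  simp [Mlist, Mm]

lemma Mlist_append (u v : List A) : Mlist (u ++ v) = Mlist v * Mlist u := by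
  simp [Mlist, List.reverse_append]

lemma Mlist_singleton (a : A) : Mlist [a] = Mm a := by
  simp [Mlist, Mm]

lemma Nm_mul_Mm (a : A) : Nm a * Mm a = 1 := by
  simp [Nm, Mm, Matrix.mul_fin_two, Matrix.one_fin_two]

lemma Mm_mul_Nm (a : A) : Mm a * Nm a = 1 := by
  simp [Nm, Mm, Matrix.mul_fin_two, Matrix.one_fin_two]

lemma cont_cons_cons (a b : A) (l : List A) :
    cont (a :: b :: l) = a * cont (b :: l) - cont l := rfl

lemma Mlist_entries : ∀ (t : List A) (a : A),
    Mlist (a :: t) 0 0 = cont (a :: t) ∧ Mlist (a :: t) 0 1 = -cont t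
  | [], a => by
      simp [Mlist_singleton, Mm, cont]
  | b :: l, a => by
      obtain ⟨h1, h2⟩ := Mlist_entries l b
      rw [Mlist_cons]
      constructor
      · rw [cont_cons_cons]
        simp [Matrix.mul_apply, Fin.sum_univ_two, Mm, h1, h2]
        ring
      · simp [Matrix.mul_apply, Fin.sum_univ_two, Mm, h1]

lemma cont_map {R S : Type*} [CommRing R] [CommRing S] (f : R →+* S) :
    ∀ w : List R, cont (w.map f) = f (cont w)
  | [] => by simp [cont]
  | [a] => by simp [cont]
  | a :: b :: l => by
      simp only [List.map_cons, cont_cons_cons]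
      rw [show (f b :: l.map f) = (b :: l).map f from rfl, cont_map f (b :: l), cont_map f l]
      simp

lemma Mlist_map {R S : Type*} [CommRing R] [CommRing S] (f : R →+* S) :
    ∀ w : List R, Mlist (w.map f) = (Mlist w).map f
  | [] => by simp [Mlist_nil, Matrix.map_one f f.map_zero f.map_one]
  | a :: t => by
      rw [List.map_cons, Mlist_cons, Mlist_cons, Mlist_map f t,
        Matrix.map_mul]
      congr 1
      ext i j
      fin_cases i <;> fin_cases j <;> simp [Mm]

end Stmt18aux
namespace Stmt18aux

lemma cont_rep_cons (h : ℤ) (t : List ℤ) :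
    ∀ a : ℕ, cont (List.replicate a (2:ℤ) ++ h :: t)
        = (a+1) * cont (h :: t) - a * cont t
  | 0 => by simp
  | 1 => by
      simp only [List.replicate_succ, List.replicate_zero, List.cons_append, List.nil_append,
        cont_cons_cons]
      ring
  | (a+2) => by
      have h1 := cont_rep_cons h t (a+1)
      have h0 := cont_rep_cons h t a
      simp only [List.replicate_succ, List.cons_append] at h1 ⊢
      rw [cont_cons_cons]
      rw [show (List.replicate a 2 ++ h :: t : List ℤ)
          = List.replicate a 2 ++ h :: t from rfl] at h0
      rw [h1, h0]
      push_cast; ring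

end Stmt18aux
namespace Stmt18aux

lemma cont_rep (a : ℕ) : cont (List.replicate a (2:ℤ)) = a + 1 := by
  cases a with
  | zero => simp [cont]
  | succ a =>
      rw [List.replicate_succ']
      rw [show ([2] : List ℤ) = (2:ℤ) :: [] from rfl, cont_rep_cons]
      simp [cont]; push_cast; ring

lemma cont_repA (a : ℕ) : cont (List.replicate a (2:ℤ) ++ [1]) = 1 := by
  rw [show ([1] : List ℤ) = (1:ℤ) :: [] from rfl, cont_rep_cons]
  simp [cont]

lemma cont_repB (b : ℕ) : cont (1 :: List.replicate b (2:ℤ)) = 1 := by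
  cases b with
  | zero => simp [cont]
  | succ b =>
      rw [List.replicate_succ, cont_cons_cons]
      have h1 : cont ((2:ℤ) :: List.replicate b 2) = (b:ℤ) + 2 := by
        have := cont_rep (b+1); rw [List.replicate_succ] at this
        rw [this]; push_cast; ring
      rw [h1, cont_rep]; ring

lemma cont_S3 (a : ℕ) (x : ℤ) : cont (List.replicate a (2:ℤ) ++ [1, x]) = x - 1 - a := by
  rw [show ([1, x] : List ℤ) = (1:ℤ) :: [x] from rfl, cont_rep_cons]
  simp [cont]; ring

lemma cont_S6 (b : ℕ) (x : ℤ) : cont (x :: 1 :: List.replicate b (2:ℤ)) = x - 1 - b := by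
  rw [cont_cons_cons, cont_repB, cont_rep]; ring

lemma cont_S4 (a b : ℕ) (x : ℤ) :
    cont (List.replicate a (2:ℤ) ++ 1 :: x :: 1 :: List.replicate b 2) = x - 2 - b - a := by
  rw [cont_rep_cons]
  rw [show cont ((1:ℤ) :: x :: 1 :: List.replicate b 2)
      = 1 * cont (x :: 1 :: List.replicate b 2) - cont (1 :: List.replicate b 2) from rfl]
  rw [cont_S6, cont_repB]; ring

def cw (n : ℕ) : List ℤ := 1 :: ((n:ℤ)-2) :: 1 :: List.replicate (n-3) 2

lemma cw_length (n : ℕ) (hn : 3 ≤ n) : (cw n).length = n := by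
  simp [cw]; omega

lemma CL (n i k : ℕ) (hn : 4 ≤ n) (hi : i < n) (hk1 : 1 ≤ k) (hk : k ≤ n - 3) :
    (cont (((cw n).rotate i).take k) = 1 ∧ (i = 2 ∨ i + k = 1 ∨ i + k = n + 1)) ∨
    2 ≤ cont (((cw n).rotate i).take k) := by
  have hlen : (cw n).length = n := cw_length n (by omega)
  have hrot : (cw n).rotate i = (cw n).drop i ++ (cw n).take i :=
    List.rotate_eq_drop_append_take (by omega)
  rw [hrot]
  set x : ℤ := (n:ℤ) - 2 with hx
  match i, hi with
  | 0, _ =>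
      simp only [List.drop_zero, List.take_zero, List.append_nil]
      match k, hk1 with
      | 1, _ =>
          left
          constructor
          · simp [cw, cont]
          · omega
      | 2, _ =>
          right
          rw [show ((cw n).take 2) = [1, x] from by simp [cw, hx]]
          rw [show cont ([1, x] : List ℤ) = 1 * cont [x] - cont [] from rfl]
          simp [cont]; omega
      | (k+3), _ =>
          right
          rw [show ((cw n).take (k+3)) = 1 :: x :: 1 :: List.replicate k 2 from by
            simp [cw, List.take_replicate]
            congr 1
            omega]
          have := cont_S4 0 k x
          simp only [List.replicate_zero, List.nil_append] at this
          rw [this]; omega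
  | 1, _ =>
      rw [show ((cw n).drop 1) = x :: 1 :: List.replicate (n-3) 2 from by simp [cw, hx]]
      rw [show ((cw n).take 1) = [1] from by simp [cw]]
      rw [List.take_append]
      rw [show k - (x :: 1 :: List.replicate (n-3) 2).length = 0 from by simp; omega]
      simp only [List.take_zero, List.append_nil]
      match k, hk1 with
      | 1, _ =>
          right
          simp only [List.take_succ_cons, List.take_zero]
          simp [cont]; omega
      | (k+2), _ =>
          right
          simp only [List.take_succ_cons]
          rw [List.take_replicate, show min k (n-3) = k from by omega]
          rw [cont_S6]; omega
  | 2, _ =>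
      left
      refine ⟨?_, Or.inl rfl⟩
      rw [show ((cw n).drop 2) = 1 :: List.replicate (n-3) 2 from by simp [cw]]
      rw [show ((cw n).take 2) = [1, x] from by simp [cw, hx]]
      rw [List.take_append]
      rw [show k - ((1:ℤ) :: List.replicate (n-3) 2).length = 0 from by simp; omega]
      simp only [List.take_zero, List.append_nil]
      match k, hk1 with
      | (k+1), _ =>
          simp only [List.take_succ_cons]
          rw [List.take_replicate, show min k (n-3) = k from by omega]
          exact cont_repB k
  | (i+3), hi =>
      rw [show ((cw n).drop (i+3)) = List.replicate (n-(i+3)) 2 from by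
        simp [cw, List.drop_replicate]
        omega]
      rw [show ((cw n).take (i+3)) = 1 :: x :: 1 :: List.replicate i 2 from by
        simp [cw, List.take_replicate]
        congr 1
        omega]
      rw [List.take_append]
      rw [List.take_replicate, List.length_replicate]
      set a := n - (i+3) with ha
      rcases le_or_gt k a with hka | hka
      · -- window is all 2's
        right
        rw [show min k a = k from by omega, show k - a = 0 from by omega]
        simp only [List.take_zero, List.append_nil]
        rw [cont_rep]; omega
      · rw [show min k a = a from by omega]
        have hj : 1 ≤ k - a := by omega
        have hja : k - a ≤ i := by omega
        match hkk : k - a, hj with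
        | 1, _ =>
            left
            constructor
            · simpa using cont_repA a
            · right; right; omega
        | 2, _ =>
            right
            simp only [List.take_succ_cons, List.take_zero]
            rw [cont_S3]; omega
        | (j+3), _ =>
            right
            simp only [List.take_succ_cons]
            rw [List.take_replicate, show min j i = j from by omega]
            rw [cont_S4]; omega

end Stmt18aux
namespace Stmt18aux

lemma CORE (n iF iS k : ℕ) (hn : 4 ≤ n) (hiF : iF < n) (hiS : iS < n)
    (hadj : (iS + 1) % n = iF) (hk1 : 1 ≤ k) (hk : k ≤ n - 3) (δ : ℤ)
    (hδ : δ = 1 ∨ δ = -1)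
    (h1 : cont (((cw n).rotate iF).take k) = δ)
    (h2 : cont (((cw n).rotate iS).take k) = δ) : False := by
  have hadj' : iS + 1 = iF ∨ (iS = n - 1 ∧ iF = 0) := by
    rcases Nat.lt_or_ge (iS + 1) n with h | h
    · left; rw [Nat.mod_eq_of_lt h] at hadj; exact hadj
    · have h' : iS + 1 = n := by omega
      right
      rw [h', Nat.mod_self] at hadj
      omega
  clear hadj
  rcases CL n iF k hn hiF hk1 hk with ⟨u1, p1⟩ | g1
  · rcases CL n iS k hn hiS hk1 hk with ⟨u2, p2⟩ | g2
    · rcases hadj' with h | ⟨h, h'⟩ <;>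
        rcases p1 with p1 | p1 | p1 <;> rcases p2 with p2 | p2 | p2 <;> omega
    · rw [h2] at g2
      rw [h1] at u1
      omega
  · rw [h1] at g1
    rcases hδ with h | h <;> rw [h] at g1 <;> norm_num at g1

end Stmt18aux
namespace Stmt18aux

def dw (n : ℕ) : List ℤ := 2 :: 1 :: ((n:ℤ)-2) :: 1 :: List.replicate (n-4) 2

lemma Mlist_rep (k : ℕ) :
    Mlist (List.replicate k (2:ℤ)) = !![(k:ℤ)+1, -(k:ℤ); (k:ℤ), 1-(k:ℤ)] := by
  induction k with
  | zero => simp [Mlist_nil, Matrix.one_fin_two]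
  | succ k ih =>
      rw [List.replicate_succ, Mlist_cons, ih]
      ext i j
      fin_cases i <;> fin_cases j <;>
        (simp [Mm, Matrix.mul_fin_two]; try push_cast; try ring)

lemma Mlist_cw (n : ℕ) (hn : 4 ≤ n) : Mlist (cw n) = -1 := by
  have hc : ((n - 3 : ℕ) : ℤ) = (n : ℤ) - 3 := by omega
  rw [show cw n = (1 : ℤ) :: (((n:ℤ)-2) :: (1 :: List.replicate (n-3) 2)) from rfl,
    Mlist_cons, Mlist_cons, Mlist_cons, Mlist_rep, hc]
  rw [show (-1 : Matrix (Fin 2) (Fin 2) ℤ) = !![-1,0;0,-1] from by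
    simp [Matrix.one_fin_two]]
  ext i j
  fin_cases i <;> fin_cases j <;>
    (simp [Mm, Matrix.mul_fin_two]; try push_cast; try ring)

lemma Mlist_dw (n : ℕ) (hn : 4 ≤ n) : Mlist (dw n) = -1 := by
  have hc : ((n - 4 : ℕ) : ℤ) = (n : ℤ) - 4 := by omega
  rw [show dw n = (2:ℤ) :: ((1 : ℤ) :: (((n:ℤ)-2) :: (1 :: List.replicate (n-4) 2))) from rfl,
    Mlist_cons, Mlist_cons, Mlist_cons, Mlist_cons, Mlist_rep, hc]
  rw [show (-1 : Matrix (Fin 2) (Fin 2) ℤ) = !![-1,0;0,-1] from by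
    simp [Matrix.one_fin_two]]
  ext i j
  fin_cases i <;> fin_cases j <;>
    (simp [Mm, Matrix.mul_fin_two]; try push_cast; try ring)

lemma matrix_pair_eq (M N : Matrix (Fin 2) (Fin 2) (ℤ × ℤ))
    (h1 : M.map (RingHom.fst ℤ ℤ) = N.map (RingHom.fst ℤ ℤ))
    (h2 : M.map (RingHom.snd ℤ ℤ) = N.map (RingHom.snd ℤ ℤ)) : M = N := by
  ext i j
  · have := congrFun (congrFun h1 i) j
    simpa [Matrix.map_apply] using this
  · have := congrFun (congrFun h2 i) j
    simpa [Matrix.map_apply] using this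

lemma map_neg_one (f : (ℤ×ℤ) →+* ℤ) :
    (-1 : Matrix (Fin 2) (Fin 2) (ℤ×ℤ)).map f = -1 := by
  ext i j
  simp [Matrix.map_apply, Matrix.neg_apply, Matrix.one_apply, apply_ite f]

lemma map_one' (f : (ℤ×ℤ) →+* ℤ) :
    (1 : Matrix (Fin 2) (Fin 2) (ℤ×ℤ)).map f = 1 := by
  ext i j
  simp [Matrix.map_apply, Matrix.one_apply, apply_ite f]

def Lw (n : ℕ) : List (ℤ × ℤ) :=
  ((1, 2) : ℤ × ℤ) :: (((n : ℤ) - 2, 1) : ℤ × ℤ) :: ((1, (n : ℤ) - 2) : ℤ × ℤ) ::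
    ((2, 1) : ℤ × ℤ) :: List.replicate (n - 4) ((2, 2) : ℤ × ℤ)

lemma Lw_fst (n : ℕ) (hn : 4 ≤ n) : (Lw n).map (RingHom.fst ℤ ℤ) = cw n := by
  simp [Lw, cw]
  rw [show n - 3 = (n-4) + 1 from by omega, List.replicate_succ]

lemma Lw_snd (n : ℕ) (hn : 4 ≤ n) : (Lw n).map (RingHom.snd ℤ ℤ) = dw n := by
  simp [Lw, dw]

lemma Mlist_Lw (n : ℕ) (hn : 4 ≤ n) : Mlist (Lw n) = -1 := by
  apply matrix_pair_eq
  · rw [← Mlist_map, Lw_fst n hn, Mlist_cw n hn, map_neg_one]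
  · rw [← Mlist_map, Lw_snd n hn, Mlist_dw n hn, map_neg_one]

end Stmt18aux
namespace Stmt18aux

lemma Lw_length (n : ℕ) (hn : 4 ≤ n) : (Lw n).length = n := by
  simp [Lw]; omega

lemma dw_eq_rot (n : ℕ) (hn : 4 ≤ n) : dw n = (cw n).rotate (n-1) := by
  rw [List.rotate_eq_drop_append_take (by rw [cw_length n (by omega)]; omega)]
  rw [show n - 1 = (n-4) + 1 + 1 + 1 from by omega]
  simp only [cw, List.drop_succ_cons, List.take_succ_cons, List.drop_replicate,
    List.take_replicate]
  rw [show n - 3 - (n - 4) = 1 from by omega, show min (n-4) (n-3) = n - 4 from by omega]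
  simp [dw]

lemma cw_rev (n : ℕ) (hn : 4 ≤ n) : (cw n).reverse = (cw n).rotate 3 := by
  rw [List.rotate_eq_drop_append_take (by rw [cw_length n (by omega)]; omega)]
  simp [cw]

lemma dw_rev (n : ℕ) (hn : 4 ≤ n) : (dw n).reverse = (cw n).rotate 4 := by
  rw [List.rotate_eq_drop_append_take (by rw [cw_length n (by omega)]; omega)]
  rw [show (4 : ℕ) = 1 + 1 + 1 + 1 from rfl]
  simp only [cw, List.drop_succ_cons, List.take_succ_cons, List.drop_replicate,
    List.take_replicate]
  rw [show n - 3 - 1 = n - 4 from by omega, show min 1 (n-3) = 1 from by omega]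
  simp [dw]

lemma window_extract {A : Type*} [CommRing A] (X u w : List A) (j : ℕ)
    (h : u ++ w = X.rotate j) :
    w = (X.rotate ((j + u.length) % X.length)).take w.length := by
  rw [List.rotate_mod, ← List.rotate_rotate, ← h,
    List.rotate_eq_drop_append_take (by simp : u.length ≤ (u ++ w).length),
    List.drop_left, List.take_left]

lemma oplus_parts {A : Type*} [CommRing A] (c1 b1 : A) (tc tb : List A) :
    oplus (c1 :: tc) (b1 :: tb)
      = ((c1 + tb.getLastD b1) :: (tc.dropLast ++ [tc.getLastD c1 + b1])) ++ tb.dropLast := by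
  show (c1 + tb.getLastD b1) :: (tc.dropLast ++ ((tc.getLastD c1 + b1) :: tb.dropLast)) = _
  simp

lemma NN_entry (a b : ℤ × ℤ) : (Nm a * Nm b) 0 0 = -1 := by
  simp [Nm, Matrix.mul_fin_two]

end Stmt18aux
namespace Stmt18aux

lemma Mlist_ones : Mlist [((1:ℤ),(1:ℤ)), (1,1), (1,1)] = -1 := by
  rw [show [((1:ℤ),(1:ℤ)), (1,1), (1,1)]
      = ((1:ℤ),(1:ℤ)) :: (((1:ℤ),(1:ℤ)) :: (((1:ℤ),(1:ℤ)) :: [])) from rfl,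
    Mlist_cons, Mlist_cons, Mlist_cons, Mlist_nil, one_mul]
  ext i j <;> fin_cases i <;> fin_cases j <;>
    simp [Mm, Matrix.mul_fin_two, Prod.ext_iff]

lemma rotate_mod' {A : Type*} (X : List A) (m n' : ℕ) (h : X.length = n') :
    X.rotate (m % n') = X.rotate m := by
  subst h; exact List.rotate_mod X m

lemma oplus_len {A : Type*} [CommRing A] (c1 b1 : A) (tc tb : List A)
    (htc : tc ≠ []) (htb : tb ≠ []) :
    (oplus (c1 :: tc) (b1 :: tb)).length = tc.length + tb.length := by
  rw [oplus_parts]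
  simp [List.length_dropLast]
  have := List.length_pos_iff.mpr htc
  have := List.length_pos_iff.mpr htb
  omega

end Stmt18aux

open Stmt18aux in
theorem stmt18 (n : ℕ) (hn : 3 ≤ n) :
    ∃ l : List (ℤ × ℤ), l.length = n ∧ (Mlist l = 1 ∨ Mlist l = -1) ∧
      (¬ ∃ (lb lc : List (ℤ × ℤ)), 3 ≤ lb.length ∧ 3 ≤ lc.length ∧
          (Mlist lb = 1 ∨ Mlist lb = -1) ∧
          (∃ j : ℕ, oplus lc lb = l.rotate j ∨ oplus lc lb = l.reverse.rotate j)) ∧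
      (4 ≤ n →
        l = ((1, 2) : ℤ × ℤ) :: (((n : ℤ) - 2, 1) : ℤ × ℤ) :: ((1, (n : ℤ) - 2) : ℤ × ℤ) ::
            ((2, 1) : ℤ × ℤ) :: List.replicate (n - 4) ((2, 2) : ℤ × ℤ)) := by
  rcases Nat.lt_or_ge n 4 with h4 | h4
  · -- n = 3
    have hn3 : n = 3 := by omega
    subst hn3
    refine ⟨[((1:ℤ),(1:ℤ)), (1,1), (1,1)], by simp, Or.inr Mlist_ones, ?_, by omega⟩
    rintro ⟨lb, lc, hlb, hlc, -, j, hcase⟩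
    obtain _ | ⟨c1, tc⟩ := lc
    · simp at hlc
    obtain _ | ⟨b1, tb⟩ := lb
    · simp at hlb
    simp only [List.length_cons] at hlb hlc
    have htc : tc ≠ [] := by intro h; subst h; simp at hlc
    have htb : tb ≠ [] := by intro h; subst h; simp at hlb
    have hlen := oplus_len c1 b1 tc tb htc htb
    rcases hcase with h | h <;>
    · rw [h] at hlen
      simp [List.length_rotate] at hlen
      omega
  · -- n ≥ 4
    refine ⟨Lw n, Lw_length n h4, Or.inr (Mlist_Lw n h4), ?_, fun _ => rfl⟩
    rintro ⟨lb, lc, hlb, hlc, hMb, j, hcase⟩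
    obtain _ | ⟨c1, tc⟩ := lc
    · simp at hlc
    obtain _ | ⟨b1, tb⟩ := lb
    · simp at hlb
    simp only [List.length_cons] at hlb hlc
    have htc : tc ≠ [] := by intro h; subst h; simp at hlc
    have htb : tb ≠ [] := by intro h; subst h; simp at hlb
    set w : List (ℤ × ℤ) := tb.dropLast with hw
    set bm : ℤ × ℤ := tb.getLast htb with hbm
    set u : List (ℤ × ℤ) := (c1 + tb.getLastD b1) :: (tc.dropLast ++ [tc.getLastD c1 + b1])
      with hu
    have hop : oplus (c1 :: tc) (b1 :: tb) = u ++ w := oplus_parts c1 b1 tc tb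
    have hulen : u.length = tc.length + 1 := by
      have := List.length_pos_iff.mpr htc
      simp [hu, List.length_dropLast]
      omega
    have hwlen : w.length = tb.length - 1 := by simp [hw, List.length_dropLast]
    set k : ℕ := w.length with hk
    -- Mlist of the middle word
    have hM : Mm bm * Mlist w * Mm b1 = Mlist (b1 :: tb) := by
      conv_rhs => rw [show tb = w ++ [bm] from (List.dropLast_append_getLast htb).symm]
      rw [Mlist_cons, Mlist_append, Mlist_singleton]
    have hww : Mlist w = Nm bm * Mlist (b1 :: tb) * Nm b1 := by
      rw [← hM, show Nm bm * (Mm bm * Mlist w * Mm b1) * Nm b1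
          = (Nm bm * Mm bm) * Mlist w * (Mm b1 * Nm b1) from by noncomm_ring,
        Nm_mul_Mm, Mm_mul_Nm, one_mul, mul_one]
    obtain ⟨δ, hδpm, hδ1, hδ2⟩ :
        ∃ δ : ℤ, (δ = 1 ∨ δ = -1) ∧ (Mlist w 0 0).1 = δ ∧ (Mlist w 0 0).2 = δ := by
      rcases hMb with hE | hE
      · refine ⟨-1, Or.inr rfl, ?_, ?_⟩ <;>
        · rw [hww, hE, mul_one, show ((Nm bm * Nm b1) 0 0) = -1 from NN_entry bm b1]
          rfl
      · refine ⟨1, Or.inl rfl, ?_, ?_⟩ <;>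
        · rw [hww, hE,
            show Nm bm * (-1) * Nm b1 = -(Nm bm * Nm b1) from by noncomm_ring,
            show (-(Nm bm * Nm b1)) 0 0 = -((Nm bm * Nm b1) 0 0) from rfl,
            NN_entry bm b1]
          rfl
    -- from entry to cont
    have hwne : w ≠ [] := by
      apply List.ne_nil_of_length_pos
      rw [hw, List.length_dropLast]
      omega
    have hcontw : (Mlist w) 0 0 = cont w := by
      obtain _ | ⟨wh, wt⟩ := w
      · exact absurd rfl hwne
      · exact (Mlist_entries wt wh).1
    have hcf : cont (w.map (RingHom.fst ℤ ℤ)) = δ := by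
      rw [cont_map]
      rw [← hcontw]
      exact hδ1
    have hcs : cont (w.map (RingHom.snd ℤ ℤ)) = δ := by
      rw [cont_map, ← hcontw]
      exact hδ2
    -- lengths
    have hk1 : 1 ≤ k := by
      have := List.length_pos_iff.mpr hwne; omega
    have hcwlen : (cw n).length = n := cw_length n (by omega)
    have hkn : k ≤ n - 3 := by
      have hXlen : (oplus (c1 :: tc) (b1 :: tb)).length = n := by
        rcases hcase with h | h <;> rw [h] <;>
          simp [List.length_rotate, Lw_length n h4]
      rw [hop] at hXlen
      simp only [List.length_append] at hXlen
      omega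
    have hn0 : 0 < n := by omega
    rcases hcase with h | h
    · -- direct rotation
      rw [hop] at h
      have hXlen : ((Lw n)).length = n := Lw_length n h4
      have hwin := window_extract (Lw n) u w j h
      rw [hXlen] at hwin
      set i : ℕ := (j + u.length) % n with hi
      have hiltn : i < n := Nat.mod_lt _ hn0
      have hfst : w.map (RingHom.fst ℤ ℤ) = ((cw n).rotate i).take k := by
        rw [hwin, List.map_take, List.map_rotate, Lw_fst n h4]
      have hsnd : w.map (RingHom.snd ℤ ℤ)
          = ((cw n).rotate ((n - 1 + i) % n)).take k := by
        rw [hwin, List.map_take, List.map_rotate, Lw_snd n h4, dw_eq_rot n h4,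
          List.rotate_rotate, rotate_mod' (cw n) (n - 1 + i) n hcwlen]
      set iS : ℕ := (n - 1 + i) % n with hiS
      have hiSlt : iS < n := Nat.mod_lt _ hn0
      have hadj : (iS + 1) % n = i := by
        rw [hiS, Nat.mod_add_mod, show n - 1 + i + 1 = n + i from by omega,
          Nat.add_mod_left, Nat.mod_eq_of_lt hiltn]
      exact CORE n i iS k h4 hiltn hiSlt hadj hk1 hkn δ hδpm
        (by rw [← hfst]; exact hcf) (by rw [← hsnd]; exact hcs)
    · -- reversed rotation
      rw [hop] at h
      have hwin := window_extract (Lw n).reverse u w j h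
      rw [List.length_reverse, Lw_length n h4] at hwin
      set i : ℕ := (j + u.length) % n with hi
      have hfst : w.map (RingHom.fst ℤ ℤ) = ((cw n).rotate ((3 + i) % n)).take k := by
        rw [hwin, List.map_take, List.map_rotate, List.map_reverse, Lw_fst n h4,
          cw_rev n h4, List.rotate_rotate, rotate_mod' (cw n) (3 + i) n hcwlen]
      have hsnd : w.map (RingHom.snd ℤ ℤ) = ((cw n).rotate ((4 + i) % n)).take k := by
        rw [hwin, List.map_take, List.map_rotate, List.map_reverse, Lw_snd n h4,
          dw_rev n h4, List.rotate_rotate, rotate_mod' (cw n) (4 + i) n hcwlen]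
      set iF : ℕ := (4 + i) % n with hiF
      set iS : ℕ := (3 + i) % n with hiS
      have hiFlt : iF < n := Nat.mod_lt _ hn0
      have hiSlt : iS < n := Nat.mod_lt _ hn0
      have hadj : (iS + 1) % n = iF := by
        rw [hiS, Nat.mod_add_mod, show 3 + i + 1 = 4 + i from by omega, hiF]
      exact CORE n iF iS k h4 hiFlt hiSlt hadj hk1 hkn δ hδpm
        (by rw [← hsnd]; exact hcs) (by rw [← hfst]; exact hcf)
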